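/- Let N be a nested set of the cycle graph C_m of cardinality k with 1 ≤ k ≤ m−1, and let d be the order of the rotation subgroup (D_m)_N ∩ ⟨σ_1⟩ of its stabilizer. Then d divides k, d divides m, and d + k ≤ m. Consequently α_m(d,k) = β_m(d,k) = 0 whenever d ∤ k, d ∤ m, or d + k > m. -/

import Mathlib

open Pointwise

def cycleGraph (m : ℕ) : SimpleGraph (ZMod m) where
  Adj i j := i ≠ j ∧ (j = i + 1 ∨ i = j + 1)
  symm := ⟨fun i j h => ⟨h.1.symm, h.2.symm⟩⟩
  loopless := ⟨fun i h => h.1 rfl⟩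

def IsConnSubset (m : ℕ) (I : Set (ZMod m)) : Prop :=
  ((cycleGraph m).induce I).Connected

def IsNested (m : ℕ) (N : Set (Set (ZMod m))) : Prop :=
  N.Finite ∧
  (∀ I ∈ N, I.Nonempty ∧ I ≠ Set.univ ∧ IsConnSubset m I) ∧
  (∀ I ∈ N, ∀ J ∈ N, I ⊆ J ∨ J ⊆ I ∨ I ∩ J = ∅) ∧
  (∀ S : Finset (Set (ZMod m)), ↑S ⊆ N → 2 ≤ S.card →
    ((S : Set (Set (ZMod m))).Pairwise fun I J => I ∩ J = ∅) →
    ¬ IsConnSubset m (⋃ I ∈ S, I))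

def rot (m : ℕ) : Equiv.Perm (ZMod m) := Equiv.addRight 1

def cycRefl (m : ℕ) : Equiv.Perm (ZMod m) := Equiv.neg (ZMod m)

def dihedral (m : ℕ) : Subgroup (Equiv.Perm (ZMod m)) :=
  Subgroup.closure {rot m, cycRefl m}

def IsReflection (m : ℕ) (φ : Equiv.Perm (ZMod m)) : Prop :=
  φ ∈ dihedral m ∧ φ ∉ Subgroup.zpowers (rot m)

def nestedStab (m : ℕ) (N : Set (Set (ZMod m))) : Subgroup (Equiv.Perm (ZMod m)) :=
  dihedral m ⊓ MulAction.stabilizer (Equiv.Perm (ZMod m)) N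

def rotStab (m : ℕ) (N : Set (Set (ZMod m))) : Subgroup (Equiv.Perm (ZMod m)) :=
  Subgroup.zpowers (rot m) ⊓ nestedStab m N

noncomputable def alphaNum (m d k : ℕ) : ℕ :=
  {N : Set (Set (ZMod m)) | IsNested m N ∧ N.ncard = k ∧
    Nat.card (rotStab m N) = d ∧ ¬ ∃ φ ∈ nestedStab m N, IsReflection m φ}.ncard

noncomputable def betaNum (m d k : ℕ) : ℕ :=
  {N : Set (Set (ZMod m)) | IsNested m N ∧ N.ncard = k ∧
    Nat.card (rotStab m N) = d ∧ ∃ φ ∈ nestedStab m N, IsReflection m φ}.ncard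

noncomputable def gammaNum (m d k : ℕ) : ℕ := alphaNum m d k + betaNum m d k


section Aux

set_option linter.unusedVariables false

lemma rot_pow (m : ℕ) (n : ℕ) : (rot m)^n = Equiv.addRight (n : ZMod m) := by
  induction n with
  | zero => ext x; simp [rot]
  | succ n ih => ext x; simp [pow_succ, ih, rot]; ring

lemma rot_zpow (m : ℕ) (n : ℤ) : (rot m)^n = Equiv.addRight (n : ZMod m) := by
  cases n with
  | ofNat k => rw [Int.ofNat_eq_coe, zpow_natCast, rot_pow]; norm_cast
  | negSucc k =>
      rw [zpow_negSucc, rot_pow, inv_eq_iff_mul_eq_one]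
      ext x
      simp [Int.cast_negSucc, Equiv.addRight]
      ring

lemma exists_addRight {m : ℕ} {φ : Equiv.Perm (ZMod m)}
    (h : φ ∈ Subgroup.zpowers (rot m)) : ∃ c : ZMod m, φ = Equiv.addRight c := by
  obtain ⟨n, rfl⟩ := h
  exact ⟨(n : ZMod m), rot_zpow m n⟩

lemma orderOf_rot (m : ℕ) (hm : 3 ≤ m) : orderOf (rot m) = m := by
  have h1 : (rot m)^m = 1 := by
    rw [rot_pow]; ext x; simp [ZMod.natCast_self]
  rw [orderOf_eq_iff (by omega)]
  refine ⟨h1, fun n hn hn0 h => ?_⟩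
  rw [rot_pow] at h
  have : (n : ZMod m) = 0 := by
    have := congrArg (fun e : Equiv.Perm (ZMod m) => e 0) h
    simpa using this
  rw [ZMod.natCast_eq_zero_iff] at this
  exact absurd (Nat.le_of_dvd hn0 this) (by omega)

lemma val_add_one {m : ℕ} (hm : 3 ≤ m) (z : ZMod m) (hz : z ≠ -1) : (z + 1).val = z.val + 1 := by
  haveI : NeZero m := ⟨by omega⟩
  have hlt : z.val < m := ZMod.val_lt z
  have hne : z.val + 1 < m := by
    rcases lt_or_eq_of_le (Nat.succ_le_of_lt hlt) with h | h
    · exact h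
    · exfalso
      apply hz
      have : z = ((m - 1 : ℕ) : ZMod m) := by
        conv_lhs => rw [← ZMod.natCast_rightInverse z]
        congr 1
        omega
      rw [this]
      have : ((m : ℕ) : ZMod m) = 0 := ZMod.natCast_self m
      push_cast [Nat.cast_sub (by omega : 1 ≤ m)]
      rw [this]; ring
  have h1 : (1 : ZMod m).val = 1 := by
    haveI : Fact (1 < m) := ⟨by omega⟩
    exact ZMod.val_one m
  rw [ZMod.val_add_of_lt (by omega)] ; omega

lemma val_sub_one {m : ℕ} (hm : 3 ≤ m) (z : ZMod m) (hz : z ≠ 0) : (z - 1).val = z.val - 1 ∧ z.val ≠ 0 := by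
  haveI : NeZero m := ⟨by omega⟩
  have h1 : z - 1 ≠ -1 := by
    intro h; apply hz; rwa [sub_eq_iff_eq_add, neg_add_cancel] at h
  have := val_add_one hm (z - 1) h1
  rw [sub_add_cancel] at this
  have hz' : z.val ≠ 0 := by
    intro h0
    apply hz
    have : z = ((z.val : ℕ) : ZMod m) := (ZMod.natCast_rightInverse z).symm
    rw [this, h0]; simp
  omega

lemma endpoint_unique {m : ℕ} (hm : 3 ≤ m) {I : Set (ZMod m)} (hconn : IsConnSubset m I)
    {x y : ZMod m} (hx : x ∈ I) (hx1 : x - 1 ∉ I) (hy : y ∈ I) (hy1 : y - 1 ∉ I) : x = y := by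
  haveI : NeZero m := ⟨by omega⟩
  by_contra hxy
  set h : ↥I → ℕ := fun z => ((z : ZMod m) - x).val with hh
  have step : ∀ u v : ↥I, ((cycleGraph m).induce I).Adj u v → h v = h u + 1 ∨ h u = h v + 1 := by
    rintro ⟨u, hu⟩ ⟨v, hv⟩ hadj
    obtain ⟨hne, hcase | hcase⟩ : u ≠ v ∧ (v = u + 1 ∨ u = v + 1) := hadj
    · left
      have : u - x ≠ -1 := by
        intro hcon
        apply hx1
        have : u = x - 1 := by linear_combination hcon
        rwa [← this]
      have := val_add_one hm (u - x) this
      simp only [hh]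
      rw [hcase]
      convert this using 2
      ring
    · right
      have : v - x ≠ -1 := by
        intro hcon
        apply hx1
        have : v = x - 1 := by linear_combination hcon
        rwa [← this]
      have := val_add_one hm (v - x) this
      simp only [hh]
      rw [hcase]
      convert this using 2
      ring
  have ivt : ∀ (u v : ↥I) (p : ((cycleGraph m).induce I).Walk u v) (t : ℕ),
      ((h u ≤ t ∧ t ≤ h v) ∨ (h v ≤ t ∧ t ≤ h u)) → ∃ w ∈ p.support, h w = t := by
    intro u v p
    induction p with
    | nil => intro t ht; exact ⟨_, SimpleGraph.Walk.start_mem_support _, by omega⟩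
    | @cons a b c hadj q ih =>
        intro t ht
        rcases step a b hadj with hs | hs <;>
        · by_cases hteq : t = h a
          · exact ⟨a, by simp, hteq.symm⟩
          · obtain ⟨w, hw, hw'⟩ := ih t (by omega)
            exact ⟨w, by simp [hw], hw'⟩
  obtain ⟨p⟩ := hconn.preconnected ⟨y, hy⟩ ⟨x, hx⟩
  have hyx : y - x ≠ 0 := sub_ne_zero.mpr (Ne.symm hxy)
  obtain ⟨hval, hvne⟩ := val_sub_one hm (y - x) hyx
  have ht0 : h ⟨x, hx⟩ = 0 := by simp [hh]
  have hty : h ⟨y, hy⟩ = (y - x).val := rfl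
  obtain ⟨w, hw, hw'⟩ := ivt _ _ p ((y - x).val - 1) (by omega)
  apply hy1
  have : (w : ZMod m) - x = (y - 1) - x := by
    have e1 : ((w : ZMod m) - x).val = (y - x).val - 1 := hw'
    have e2 : ((y - 1) - x).val = (y - x).val - 1 := by
      rw [show (y - 1) - x = (y - x) - 1 by ring, hval]
    have := e1.trans e2.symm
    calc (w : ZMod m) - x = ((((w : ZMod m) - x).val : ℕ) : ZMod m) := (ZMod.natCast_rightInverse _).symm
    _ = ((((y-1) - x).val : ℕ) : ZMod m) := by rw [this]
    _ = (y - 1) - x := ZMod.natCast_rightInverse _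
  have : (w : ZMod m) = y - 1 := by linear_combination this
  rw [← this]
  exact w.2

lemma union_subset_of_conn {m : ℕ} {N : Set (Set (ZMod m))} (hfin : N.Finite)
    (hN2 : ∀ I ∈ N, ∀ J ∈ N, I ⊆ J ∨ J ⊆ I ∨ I ∩ J = ∅)
    (hN3 : ∀ S : Finset (Set (ZMod m)), ↑S ⊆ N → 2 ≤ S.card →
      ((S : Set (Set (ZMod m))).Pairwise fun I J => I ∩ J = ∅) →
      ¬ IsConnSubset m (⋃ I ∈ S, I))
    {M : Set (Set (ZMod m))} (hM : M ⊆ N) (hconn : IsConnSubset m (⋃₀ M)) :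
    ∃ J ∈ M, ⋃₀ M ⊆ J := by
  classical
  have hMfin : M.Finite := hfin.subset hM
  -- maximal elements
  set Mx : Set (Set (ZMod m)) := {K ∈ M | ∀ K' ∈ M, K ⊆ K' → K = K'} with hMx
  have hmax : ∀ J ∈ M, ∃ K ∈ Mx, J ⊆ K := by
    intro J hJ
    have hsub : {K ∈ M | J ⊆ K}.Finite := hMfin.subset (fun _ h => h.1)
    obtain ⟨K, hK, hKmax⟩ := Set.Finite.exists_maximalFor id _ hsub ⟨J, hJ, subset_rfl⟩
    refine ⟨K, ⟨hK.1, fun K' hK' hKK' => ?_⟩, hK.2⟩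
    exact subset_antisymm hKK' (hKmax ⟨hK', hK.2.trans hKK'⟩ hKK')
  have hMxU : ⋃₀ Mx = ⋃₀ M := by
    apply subset_antisymm
    · exact Set.sUnion_subset_sUnion (fun K hK => hK.1)
    · intro x hx
      obtain ⟨J, hJ, hxJ⟩ := hx
      obtain ⟨K, hK, hJK⟩ := hmax J hJ
      exact ⟨K, hK, hJK hxJ⟩
  have hMxfin : Mx.Finite := hMfin.subset (fun _ h => h.1)
  -- Mx is pairwise disjoint
  have hpair : Mx.Pairwise fun I J => I ∩ J = ∅ := by
    intro I hI J hJ hIJ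
    rcases hN2 I (hM hI.1) J (hM hJ.1) with h | h | h
    · exact absurd (hI.2 J hJ.1 h) hIJ
    · exact absurd (hJ.2 I hI.1 h).symm hIJ
    · exact h
  -- Mx nonempty since union is connected hence nonempty
  have hUne : (⋃₀ M).Nonempty := by
    have := hconn.nonempty
    rcases this with ⟨⟨x, hx⟩⟩
    exact ⟨x, hx⟩
  have hMxne : Mx.Nonempty := by
    obtain ⟨x, J, hJ, hxJ⟩ := hUne
    obtain ⟨K, hK, _⟩ := hmax J hJ
    exact ⟨K, hK⟩
  -- the Finset of maximal elements
  set S : Finset (Set (ZMod m)) := hMxfin.toFinset with hS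
  have hScoe : (S : Set (Set (ZMod m))) = Mx := hMxfin.coe_toFinset
  have hUS : (⋃ I ∈ S, I) = ⋃₀ M := by
    rw [← hMxU, Set.sUnion_eq_biUnion, ← hScoe]
    ext x
    simp
  have hcard : S.card < 2 := by
    by_contra hcard
    push_neg at hcard
    exact hN3 S (hScoe ▸ (fun K hK => hM hK.1)) hcard (hScoe ▸ hpair) (hUS ▸ hconn)
  have hcard1 : S.card = 1 := by
    have : S.Nonempty := by
      obtain ⟨K, hK⟩ := hMxne
      exact ⟨K, hMxfin.mem_toFinset.mpr hK⟩
    have := Finset.card_pos.mpr this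
    omega
  obtain ⟨K, hK⟩ := Finset.card_eq_one.mp hcard1
  refine ⟨K, ?_, ?_⟩
  · have : K ∈ Mx := by rw [← hScoe, hK]; simp
    exact this.1
  · rw [← hMxU]
    intro x hx
    obtain ⟨J, hJ, hxJ⟩ := hx
    have : J ∈ (S : Set (Set (ZMod m))) := hScoe.symm ▸ hJ
    rw [hK] at this
    simp at this
    rwa [← this]

lemma endpoint_exists {m : ℕ} (hm : 3 ≤ m) {I : Set (ZMod m)} (hne : I.Nonempty)
    (hproper : I ≠ Set.univ) : ∃ x ∈ I, x - 1 ∉ I := by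
  haveI : NeZero m := ⟨by omega⟩
  by_contra hcon
  push_neg at hcon
  obtain ⟨a, ha⟩ := hne
  have key : ∀ s : ℕ, a - (s : ZMod m) ∈ I := by
    intro s
    induction s with
    | zero => simpa using ha
    | succ s ih =>
        have := hcon _ ih
        have e : a - ((s+1 : ℕ) : ZMod m) = a - (s : ZMod m) - 1 := by push_cast; ring
        rwa [e]
  apply hproper
  ext y
  simp only [Set.mem_univ, iff_true]
  have := key ((a - y).val)
  rwa [ZMod.natCast_rightInverse (a - y), sub_sub_cancel] at this

lemma no_translation_fix {m : ℕ} (hm : 3 ≤ m) {I : Set (ZMod m)} (hne : I.Nonempty)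
    (hproper : I ≠ Set.univ) (hconn : IsConnSubset m I) {c : ZMod m} (hc : c ≠ 0)
    (hfix : (Equiv.addRight c) • I = I) : False := by
  obtain ⟨x, hx, hx1⟩ := endpoint_exists hm hne hproper
  have hmem : x + c ∈ I := by
    rw [← hfix]
    exact ⟨x, hx, rfl⟩
  have hmem1 : (x + c) - 1 ∉ I := by
    intro hcon
    rw [← hfix] at hcon
    obtain ⟨z, hz, hz'⟩ := hcon
    have : z = x - 1 := by
      have : z + c = x + c - 1 := hz'
      linear_combination this
    rw [this] at hz
    exact hx1 hz
  have := endpoint_unique hm hconn hmem hmem1 hx hx1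
  apply hc
  linear_combination this


lemma cycle_connected {m : ℕ} (hm : 3 ≤ m) : IsConnSubset m Set.univ := by
  haveI : NeZero m := ⟨by omega⟩
  haveI : Fact (1 < m) := ⟨by omega⟩
  rw [IsConnSubset, SimpleGraph.connected_iff]
  constructor
  · have key : ∀ k : ℕ, ((cycleGraph m).induce Set.univ).Reachable ⟨0, trivial⟩ ⟨(k : ZMod m), trivial⟩ := by
      intro k
      induction k with
      | zero => rw [Nat.cast_zero]
      | succ k ih =>
          refine ih.trans (SimpleGraph.Adj.reachable ?_)
          have hne : (k : ZMod m) ≠ ((k+1:ℕ) : ZMod m) := by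
            push_cast
            intro h
            exact one_ne_zero (left_eq_add.mp h)
          refine ⟨by simpa using hne, Or.inl ?_⟩
          simp only [Function.Embedding.coe_subtype]
          push_cast
          ring
    intro u v
    have hu : ((u : ZMod m).val : ZMod m) = (u : ZMod m) := ZMod.natCast_rightInverse _
    have hv : ((v : ZMod m).val : ZMod m) = (v : ZMod m) := ZMod.natCast_rightInverse _
    have ru := key (u : ZMod m).val
    have rv := key (v : ZMod m).val
    rw [show (⟨(((u : ZMod m).val : ℕ) : ZMod m), trivial⟩ : ↥(Set.univ : Set (ZMod m)))
        = u by ext; exact hu] at ru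
    rw [show (⟨(((v : ZMod m).val : ℕ) : ZMod m), trivial⟩ : ↥(Set.univ : Set (ZMod m)))
        = v by ext; exact hv] at rv
    exact ru.symm.trans rv
  · exact ⟨⟨0, trivial⟩⟩

lemma card_le_union {m : ℕ} (hm : 3 ≤ m) {N : Set (Set (ZMod m))} (hN : IsNested m N) :
    N.ncard ≤ (⋃₀ N).ncard := by
  haveI : NeZero m := ⟨by omega⟩
  obtain ⟨hfin, hN1, hN2, hN3⟩ := hN
  have hpick : ∀ I ∈ N, ∃ x, x ∈ I ∧ ∀ J ∈ N, J ⊆ I → J ≠ I → x ∉ J := by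
    intro I hI
    by_contra hcon
    push_neg at hcon
    set M : Set (Set (ZMod m)) := {J ∈ N | J ⊆ I ∧ J ≠ I} with hM
    have hUI : ⋃₀ M = I := by
      apply subset_antisymm
      · exact Set.sUnion_subset (fun J hJ => hJ.2.1)
      · intro x hx
        obtain ⟨J, hJN, hJI, hJne, hxJ⟩ := hcon x hx
        exact ⟨J, ⟨hJN, hJI, hJne⟩, hxJ⟩
    have hconn : IsConnSubset m (⋃₀ M) := hUI ▸ (hN1 I hI).2.2
    obtain ⟨J, hJ, hsub⟩ := union_subset_of_conn hfin hN2 hN3 (fun K hK => hK.1) hconn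
    exact hJ.2.2 (subset_antisymm hJ.2.1 (hUI ▸ hsub))
  have hpick' : ∀ I : Set (ZMod m), ∃ x, I ∈ N → (x ∈ I ∧ ∀ J ∈ N, J ⊆ I → J ≠ I → x ∉ J) := by
    intro I
    by_cases hI : I ∈ N
    · obtain ⟨x, hx⟩ := hpick I hI
      exact ⟨x, fun _ => hx⟩
    · exact ⟨0, fun h => absurd h hI⟩
  choose f hf using hpick'
  have hinj : Set.InjOn f N := by
    intro I hI J hJ hIJ
    by_contra hne
    obtain ⟨hfI, hfI'⟩ := hf I hI
    obtain ⟨hfJ, hfJ'⟩ := hf J hJ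
    rcases hN2 I hI J hJ with h | h | h
    · exact hfJ' I hI h hne (hIJ ▸ hfI)
    · exact hfI' J hJ h (Ne.symm hne) (hIJ ▸ hfJ)
    · exact absurd (Set.mem_inter hfI (hIJ ▸ hfJ)) (h ▸ not_false)
  calc N.ncard = (f '' N).ncard := (Set.ncard_image_of_injOn hinj).symm
  _ ≤ (⋃₀ N).ncard := by
      apply Set.ncard_le_ncard _ (Set.toFinite _)
      rintro x ⟨I, hI, rfl⟩
      exact ⟨I, hI, (hf I hI).1⟩

lemma orbit_dvd {β G : Type*} [DecidableEq β] [Group G] [Fintype G] [MulAction G β] :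
    ∀ (B : Finset β), (∀ g : G, ∀ x ∈ B, g • x ∈ B) →
      (∀ g : G, ∀ x ∈ B, g • x = x → g = 1) → Fintype.card G ∣ B.card := by
  intro B
  induction B using Finset.strongInduction with
  | _ B ih =>
    intro hB hfree
    rcases B.eq_empty_or_nonempty with rfl | ⟨x, hx⟩
    · simp
    · set C : Finset β := Finset.image (fun g : G => g • x) Finset.univ with hC
      have hCB : C ⊆ B := by
        intro y hy
        simp only [hC, Finset.mem_image, Finset.mem_univ, true_and] at hy
        obtain ⟨g, rfl⟩ := hy
        exact hB g x hx
      have hinj : Function.Injective (fun g : G => g • x) := by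
        intro g g' h
        simp only at h
        have : (g'⁻¹ * g) • x = x := by
          rw [mul_smul, h, inv_smul_eq_iff]
        have := hfree _ x hx this
        rw [mul_eq_one_iff_eq_inv] at this
        exact (inv_injective this).symm
      have hCcard : C.card = Fintype.card G := by
        rw [hC, Finset.card_image_of_injective _ hinj, Finset.card_univ]
      have hCne : C.Nonempty := ⟨x, by
        simp only [hC, Finset.mem_image, Finset.mem_univ, true_and]
        exact ⟨1, one_smul G x⟩⟩
      have hss : B \ C ⊂ B := Finset.sdiff_ssubset hCB hCne
      have h1 : ∀ g : G, ∀ y ∈ B \ C, g • y ∈ B \ C := by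
        intro g y hy
        rw [Finset.mem_sdiff] at hy ⊢
        refine ⟨hB g y hy.1, fun hc => hy.2 ?_⟩
        simp only [hC, Finset.mem_image, Finset.mem_univ, true_and] at hc ⊢
        obtain ⟨g', hg'⟩ := hc
        exact ⟨g⁻¹ * g', by rw [mul_smul, hg', inv_smul_smul]⟩
      have h2 : ∀ g : G, ∀ y ∈ B \ C, g • y = y → g = 1 := by
        intro g y hy
        exact hfree g y (Finset.mem_sdiff.mp hy).1
      have hdvd := ih (B \ C) hss h1 h2
      have : B.card = (B \ C).card + C.card := (Finset.card_sdiff_add_card_eq_card hCB).symm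
      rw [this, hCcard]
      exact Nat.dvd_add hdvd dvd_rfl

lemma addRight_cancel {m : ℕ} {c c' : ZMod m} (h : Equiv.addRight c = Equiv.addRight c') :
    c = c' := by
  have := congrArg (fun e : Equiv.Perm (ZMod m) => e 0) h
  simpa using this

lemma master {m : ℕ} (hm : 3 ≤ m) {N : Set (Set (ZMod m))} (hN : IsNested m N) :
    Nat.card (rotStab m N) ∣ N.ncard ∧ Nat.card (rotStab m N) ∣ m ∧
      Nat.card (rotStab m N) + N.ncard ≤ m := by
  classical
  haveI : NeZero m := ⟨by omega⟩
  obtain ⟨hfin, hN1, hN2, hN3⟩ := hN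
  set d := Nat.card (rotStab m N) with hd
  -- facts about members of rotStab
  have hmem : ∀ φ ∈ rotStab m N, (∃ c : ZMod m, φ = Equiv.addRight c) ∧ φ • N = N := by
    intro φ hφ
    have h1 : φ ∈ Subgroup.zpowers (rot m) := hφ.1
    have h2 : φ ∈ MulAction.stabilizer (Equiv.Perm (ZMod m)) N := hφ.2.2
    exact ⟨exists_addRight h1, h2⟩
  -- d divides m
  have hdm : d ∣ m := by
    have hle : rotStab m N ≤ Subgroup.zpowers (rot m) := inf_le_left
    have := Subgroup.card_dvd_of_le hle
    rwa [Nat.card_zpowers, orderOf_rot m hm] at this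
  -- free action: nontrivial elements of rotStab fix no member of N
  have hfree : ∀ φ ∈ rotStab m N, ∀ I ∈ N, φ • I = I → φ = 1 := by
    intro φ hφ I hI hfix
    obtain ⟨⟨c, rfl⟩, -⟩ := hmem φ hφ
    obtain ⟨hne', hproper, hconn⟩ := hN1 I hI
    by_cases hc : c = 0
    · subst hc; ext x; simp
    · exact absurd (no_translation_fix hm hne' hproper hconn hc hfix) not_false
  -- d divides k
  have hdk : d ∣ N.ncard := by
    haveI : Fintype (rotStab m N) := Fintype.ofFinite _
    have hB : ∀ g : ↥(rotStab m N), ∀ I ∈ hfin.toFinset, g • I ∈ hfin.toFinset := by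
      intro g I hI
      rw [Set.Finite.mem_toFinset] at hI ⊢
      obtain ⟨-, hstab⟩ := hmem g.val g.2
      have : g.val • I ∈ g.val • N := Set.smul_mem_smul_set hI
      rwa [hstab] at this
    have hfr : ∀ g : ↥(rotStab m N), ∀ I ∈ hfin.toFinset, g • I = I → g = 1 := by
      intro g I hI hfix
      rw [Set.Finite.mem_toFinset] at hI
      exact Subtype.ext (hfree g.val g.2 I hI hfix)
    have := orbit_dvd (G := ↥(rotStab m N)) hfin.toFinset hB hfr
    rwa [← Nat.card_eq_fintype_card, ← hd, ← Set.ncard_eq_toFinset_card N hfin] at this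
  -- Z := complement of the union is nonempty and d ≤ ncard Z
  set U : Set (ZMod m) := ⋃₀ N with hU
  have hUproper : U ≠ Set.univ := by
    intro hUuniv
    have hconn : IsConnSubset m U := hUuniv ▸ cycle_connected hm
    obtain ⟨J, hJ, hsub⟩ := union_subset_of_conn hfin hN2 hN3 subset_rfl hconn
    have : J = Set.univ := subset_antisymm (Set.subset_univ J)
      (by rw [← hUuniv]; exact hsub)
    exact (hN1 J hJ).2.1 this
  have hZne : Uᶜ.Nonempty := by
    rw [Set.nonempty_compl]
    exact hUproper
  obtain ⟨z₀, hz₀⟩ := hZne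
  -- Z is invariant
  have hZinv : ∀ φ ∈ rotStab m N, ∀ z ∈ Uᶜ, φ z ∈ Uᶜ := by
    intro φ hφ z hz
    obtain ⟨-, hstab⟩ := hmem φ hφ
    intro hcon
    obtain ⟨J, hJ, hzJ⟩ := hcon
    apply hz
    have hstab' : φ⁻¹ • N = N := by rw [inv_smul_eq_iff, hstab]
    have hJ' : φ⁻¹ • J ∈ N := by
      rw [← hstab']
      exact Set.smul_mem_smul_set hJ
    refine ⟨φ⁻¹ • J, hJ', ?_⟩
    rw [Set.mem_smul_set_iff_inv_smul_mem]
    simpa using hzJ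
  -- injection rotStab → Z
  have hdZ : d ≤ Uᶜ.ncard := by
    have hinj : Function.Injective
        (fun φ : ↥(rotStab m N) => (⟨φ.val z₀, hZinv φ.val φ.2 z₀ hz₀⟩ : ↥(Uᶜ))) := by
      intro φ ψ h
      have h' : φ.val z₀ = ψ.val z₀ := congrArg Subtype.val h
      obtain ⟨⟨c, hc⟩, -⟩ := hmem φ.val φ.2
      obtain ⟨⟨c', hc'⟩, -⟩ := hmem ψ.val ψ.2
      rw [hc, hc'] at h'
      simp only [Equiv.coe_addRight] at h'
      have : c = c' := by exact add_left_cancel h'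
      ext x
      rw [hc, hc', this]
    have := Nat.card_le_card_of_injective _ hinj
    rwa [← hd, Nat.card_coe_set_eq] at this
  have hkU : N.ncard ≤ U.ncard := card_le_union hm ⟨hfin, hN1, hN2, hN3⟩
  have hsum : U.ncard + Uᶜ.ncard = m := by
    rw [Set.ncard_add_ncard_compl, Nat.card_zmod]
  exact ⟨hdk, hdm, by omega⟩

end Aux

theorem rotation_order_divides (m : ℕ) (hm : 3 ≤ m) :
    (∀ (N : Set (Set (ZMod m))) (k : ℕ), IsNested m N → N.ncard = k →
      1 ≤ k → k ≤ m - 1 →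
      Nat.card (rotStab m N) ∣ k ∧ Nat.card (rotStab m N) ∣ m ∧
        Nat.card (rotStab m N) + k ≤ m) ∧
    (∀ d k : ℕ, 0 < d → 0 < k → (¬ d ∣ k ∨ ¬ d ∣ m ∨ m < d + k) →
      alphaNum m d k = 0 ∧ betaNum m d k = 0) := by
  constructor
  · intro N k hN hk h1 h2
    subst hk
    exact master hm hN
  · intro d k hd hk hcond
    have key : ∀ (N : Set (Set (ZMod m))), IsNested m N → N.ncard = k →
        Nat.card (rotStab m N) = d → False := by
      intro N hN hk' hd'
      obtain ⟨h1, h2, h3⟩ := master hm hN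
      rw [hk'] at h1 h3
      rw [hd'] at h1 h2 h3
      rcases hcond with h | h | h
      · exact h h1
      · exact h h2
      · omega
    constructor
    · rw [alphaNum]
      convert Set.ncard_empty (Set (Set (ZMod m)))
      rw [Set.eq_empty_iff_forall_notMem]
      rintro N ⟨hN, hk', hd', -⟩
      exact key N hN hk' hd'
    · rw [betaNum]
      convert Set.ncard_empty (Set (Set (ZMod m)))
      rw [Set.eq_empty_iff_forall_notMem]
      rintro N ⟨hN, hk', hd', -⟩
      exact key N hN hk' hd'
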